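/- arXiv:2511.03028 — 2 statements merged into one kernel-verified Lean document; each statement's English description precedes it below -/
import Mathlib

section
/- Let M be an m×r integer matrix, let d be a positive integer dividing every entry of the j-th column of M, and let M' be the m×r matrix obtained from M by dividing the j-th column by d. If no standard basis vector of ℤ^m lies in the subgroup generated by the columns of M', then the identity map on ℤ^m induces a graph homomorphism from M^SACG to M'^SACG; in particular, χ(M^SACG) ≤ χ(M'^SACG). -/
/-- The subgroup of `ℤ^m` generated by the columns of `M`. -/
def colSpan (m r : ℕ) (M : Matrix (Fin m) (Fin r) ℤ) : AddSubgroup (Fin m → ℤ) :=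
  AddSubgroup.closure (Set.range fun j : Fin r => fun i : Fin m => M i j)

/-- The standardized Abelian Cayley graph associated to `M`. -/
def SACG (m r : ℕ) (M : Matrix (Fin m) (Fin r) ℤ) :
    SimpleGraph ((Fin m → ℤ) ⧸ colSpan m r M) where
  Adj x y := x ≠ y ∧ ∃ i : Fin m,
    x - y = QuotientAddGroup.mk (Pi.single i (1 : ℤ)) ∨
    y - x = QuotientAddGroup.mk (Pi.single i (1 : ℤ))
  symm := ⟨by
    rintro x y ⟨hne, i, h⟩
    exact ⟨hne.symm, i, h.symm⟩⟩
  loopless := ⟨by rintro x ⟨h, -⟩; exact h rfl⟩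

theorem stmt_2 (m r : ℕ) (M M' : Matrix (Fin m) (Fin r) ℤ) (j : Fin r) (d : ℤ)
    (hd : 0 < d)
    (hdiv : ∀ i, M i j = d * M' i j)
    (hcols : ∀ j' : Fin r, j' ≠ j → ∀ i, M' i j' = M i j')
    (hloops : ∀ i : Fin m, (Pi.single i (1 : ℤ) : Fin m → ℤ) ∉ colSpan m r M') :
    (∃ f : (SACG m r M) →g (SACG m r M'),
        ∀ x : Fin m → ℤ, f (QuotientAddGroup.mk x) = QuotientAddGroup.mk x) ∧
      (SACG m r M).chromaticNumber ≤ (SACG m r M').chromaticNumber := by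
  -- containment of subgroups
  have hle : colSpan m r M ≤ colSpan m r M' := by
    rw [colSpan, AddSubgroup.closure_le]
    rintro _ ⟨j', rfl⟩
    by_cases hj : j' = j
    · subst hj
      have : (fun i : Fin m => M i j') = d • (fun i : Fin m => M' i j') := by
        funext i; simpa using hdiv i
      show (fun i : Fin m => M i j') ∈ (colSpan m r M' : Set _)
      rw [this]
      exact zsmul_mem (AddSubgroup.subset_closure (Set.mem_range_self j')) d
    · have : (fun i : Fin m => M i j') = fun i : Fin m => M' i j' := by
        funext i; exact (hcols j' hj i).symm
      show (fun i : Fin m => M i j') ∈ (colSpan m r M' : Set _)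
      rw [this]
      exact AddSubgroup.subset_closure (Set.mem_range_self j')
  -- the induced additive hom on quotients
  let φ : (Fin m → ℤ) ⧸ colSpan m r M →+ (Fin m → ℤ) ⧸ colSpan m r M' :=
    QuotientAddGroup.map _ _ (AddMonoidHom.id _) hle
  have hφ : ∀ x : Fin m → ℤ, φ (QuotientAddGroup.mk x) = QuotientAddGroup.mk x :=
    fun x => rfl
  have hmap : ∀ {x y}, (SACG m r M).Adj x y → (SACG m r M').Adj (φ x) (φ y) := by
    rintro x y ⟨hne, i, h⟩
    refine ⟨?_, i, ?_⟩
    · intro hxy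
      have h0 : φ x - φ y = 0 := by rw [hxy, sub_self]
      have h0' : φ y - φ x = 0 := by rw [hxy, sub_self]
      rcases h with h | h
      · have : (QuotientAddGroup.mk (Pi.single i (1 : ℤ)) :
            (Fin m → ℤ) ⧸ colSpan m r M') = 0 := by
          rw [← h0, ← map_sub, h, hφ]
        exact hloops i ((QuotientAddGroup.eq_zero_iff _).mp this)
      · have : (QuotientAddGroup.mk (Pi.single i (1 : ℤ)) :
            (Fin m → ℤ) ⧸ colSpan m r M') = 0 := by
          rw [← h0', ← map_sub, h, hφ]
        exact hloops i ((QuotientAddGroup.eq_zero_iff _).mp this)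
    · rcases h with h | h
      · exact Or.inl (by rw [← map_sub, h, hφ])
      · exact Or.inr (by rw [← map_sub, h, hφ])
  let f : (SACG m r M) →g (SACG m r M') := ⟨φ, hmap⟩
  refine ⟨⟨f, hφ⟩, ?_⟩
  refine SimpleGraph.chromaticNumber_le_of_forall_imp fun n hc => ?_
  obtain ⟨C⟩ := hc
  exact ⟨C.comp f⟩
end

section
/- (Tomato Cage Theorem) Let y = (y_1, …, y_m)^T be an m×1 integer matrix such that y ≠ e_i and y ≠ −e_i for every standard basis vector e_i of ℤ^m, and let X = y^SACG. Then χ(X) = 2 if y has an even number of odd entries, and χ(X) = 3 if y has an odd number of odd entries. -/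
section Aux

open SimpleGraph Finset

lemma chrom_aux {V : Type*} (G : SimpleGraph V) {n : ℕ} (h1 : G.Colorable (n + 1))
    (h2 : ¬ G.Colorable n) : G.chromaticNumber = ((n + 1 : ℕ) : ℕ∞) := by
  refine le_antisymm h1.chromaticNumber_le ?_
  by_contra h
  push_neg at h
  rw [Nat.cast_add, Nat.cast_one, ENat.lt_add_one_iff (by simp : ((n : ℕ∞) ≠ ⊤))] at h
  exact h2 (SimpleGraph.chromaticNumber_le_iff_colorable.mp h)

variable {m : ℕ} (M : Matrix (Fin m) (Fin 1) ℤ) (y : Fin m → ℤ)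

lemma colSpan_eq (hM : ∀ i, M i 0 = y i) :
    colSpan m 1 M = AddSubgroup.zmultiples y := by
  rw [colSpan, AddSubgroup.zmultiples_eq_closure]
  congr 1
  have h : (fun i => M i 0) = y := funext hM
  rw [Set.range_unique]
  simp [h]

lemma mem_colSpan (hM : ∀ i, M i 0 = y i) : y ∈ colSpan m 1 M := by
  rw [colSpan_eq M y hM]
  exact ⟨1, one_smul _ _⟩

lemma single_not_mem (hM : ∀ i, M i 0 = y i)
    (hy : ∀ i : Fin m, y ≠ Pi.single i 1 ∧ y ≠ -Pi.single i 1) (i : Fin m) :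
    Pi.single i (1 : ℤ) ∉ colSpan m 1 M := by
  rw [colSpan_eq M y hM]
  rintro ⟨k, hk⟩
  simp only at hk
  have hki : k * y i = 1 := by
    have h := congrFun hk i
    simpa [Pi.single_eq_same] using h
  rcases Int.mul_eq_one_iff_eq_one_or_neg_one.mp hki with ⟨h1, -⟩ | ⟨h1, -⟩
  · exact (hy i).1 (by rw [← hk, h1, one_smul])
  · refine (hy i).2 ?_
    rw [← hk, h1]
    funext j
    simp

lemma sacg_adj (hM : ∀ i, M i 0 = y i)
    (hy : ∀ i : Fin m, y ≠ Pi.single i 1 ∧ y ≠ -Pi.single i 1) (a : Fin m → ℤ) (i : Fin m) :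
    (SACG m 1 M).Adj (QuotientAddGroup.mk a) (QuotientAddGroup.mk (a + Pi.single i 1)) := by
  constructor
  · intro h
    apply single_not_mem M y hM hy i
    have h2 := QuotientAddGroup.eq_iff_sub_mem.mp h.symm
    simpa [add_sub_cancel_left] using h2
  · refine ⟨i, Or.inr ?_⟩
    rw [← QuotientAddGroup.mk_sub]
    congr 1
    abel

/-- The homomorphism used for colorings. -/
noncomputable def sacgHom (n : ℕ) (w : Fin m → ℤ) (hM : ∀ i, M i 0 = y i)
    (hwy : ((∑ i, w i * y i : ℤ) : ZMod n) = 0) :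
    ((Fin m → ℤ) ⧸ colSpan m 1 M) →+ ZMod n :=
  QuotientAddGroup.lift _
    { toFun := fun x : Fin m → ℤ => ∑ i, ((w i * x i : ℤ) : ZMod n)
      map_zero' := by simp
      map_add' := by
        intro a b
        simp only [Pi.add_apply, mul_add, Int.cast_add, Finset.sum_add_distrib] }
    (by
      intro x hx
      rw [colSpan_eq M y hM] at hx
      obtain ⟨k, hk⟩ := hx
      simp only at hk
      subst hk
      show ∑ i, ((w i * (k • y) i : ℤ) : ZMod n) = 0
      have h1 : ∀ i ∈ Finset.univ, ((w i * (k • y) i : ℤ) : ZMod n)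
          = ((k * (w i * y i) : ℤ) : ZMod n) := by
        intro i _
        simp only [Pi.smul_apply, smul_eq_mul]
        ring_nf
      rw [Finset.sum_congr rfl h1, ← Int.cast_sum, ← Finset.mul_sum, Int.cast_mul,
        Int.cast_sum]
      rw [Int.cast_sum] at hwy
      rw [hwy, mul_zero])

lemma sacgHom_mk (n : ℕ) (w : Fin m → ℤ) (hM : ∀ i, M i 0 = y i)
    (hwy : ((∑ i, w i * y i : ℤ) : ZMod n) = 0) (v : Fin m → ℤ) :
    sacgHom M y n w hM hwy (QuotientAddGroup.mk v) = ∑ i, ((w i * v i : ℤ) : ZMod n) :=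
  rfl

lemma sacgHom_spec (n : ℕ) (w : Fin m → ℤ) (hM : ∀ i, M i 0 = y i)
    (hw : ∀ i, w i = 1 ∨ w i = -1)
    (hwy : ((∑ i, w i * y i : ℤ) : ZMod n) = 0) :
    ∀ x x', (SACG m 1 M).Adj x x' →
      sacgHom M y n w hM hwy x - sacgHom M y n w hM hwy x' = 1 ∨
      sacgHom M y n w hM hwy x - sacgHom M y n w hM hwy x' = -1 := by
  have hval : ∀ i, sacgHom M y n w hM hwy (QuotientAddGroup.mk (Pi.single i (1 : ℤ)))
      = ((w i : ℤ) : ZMod n) := by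
    intro i
    rw [sacgHom_mk]
    rw [Finset.sum_eq_single i]
    · simp
    · intro j _ hj
      simp [Pi.single_eq_of_ne hj]
    · simp
  intro x x' hadj
  obtain ⟨-, i, h | h⟩ := hadj
  · have h2 := congrArg (sacgHom M y n w hM hwy) h
    rw [map_sub, hval] at h2
    rw [h2]
    rcases hw i with h1 | h1 <;> rw [h1] <;> simp
  · have h2 := congrArg (sacgHom M y n w hM hwy) h
    rw [map_sub, hval] at h2
    have h3 : sacgHom M y n w hM hwy x - sacgHom M y n w hM hwy x'
        = -((w i : ℤ) : ZMod n) := by rw [← h2]; ring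
    rw [h3]
    rcases hw i with h1 | h1 <;> rw [h1] <;> simp

/-- The parity obstruction: a proper 2-coloring forces the sum of entries of `y` to be even. -/
lemma sacg_parity (hM : ∀ i, M i 0 = y i)
    (hy : ∀ i : Fin m, y ≠ Pi.single i 1 ∧ y ≠ -Pi.single i 1)
    (C : (SACG m 1 M).Coloring (Fin 2)) :
    ((∑ i, y i : ℤ) : ZMod 2) = 0 := by
  set c : (Fin m → ℤ) → ZMod 2 :=
    fun x => if C (QuotientAddGroup.mk x) = 0 then 0 else 1 with hc
  have hstep : ∀ (x : Fin m → ℤ) (i : Fin m), c (x + Pi.single i 1) = c x + 1 := by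
    intro x i
    have hne := C.valid (sacg_adj M y hM hy x i)
    simp only [hc]
    revert hne
    generalize C (QuotientAddGroup.mk x) = a
    generalize C (QuotientAddGroup.mk (x + Pi.single i 1)) = b
    revert a b
    decide
  have hstep' : ∀ (x : Fin m → ℤ) (i : Fin m), c (x - Pi.single i 1) = c x + 1 := by
    intro x i
    have h := hstep (x - Pi.single i 1) i
    rw [sub_add_cancel] at h
    have h2 : ∀ a b : ZMod 2, a = b + 1 → b = a + 1 := by decide
    exact h2 _ _ h
  have h20 : (2 : ZMod 2) = 0 := by decide
  have hsmul : ∀ (k : ℤ) (x : Fin m → ℤ) (i : Fin m),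
      c (x + Pi.single i k) = c x + (k : ZMod 2) := by
    intro k
    induction k using Int.induction_on with
    | zero => intro x i; simp
    | succ k ih =>
        intro x i
        have hs : (Pi.single i ((k : ℤ) + 1) : Fin m → ℤ)
            = Pi.single i (k : ℤ) + Pi.single i 1 := by
          rw [← Pi.single_add]
        have h1 : x + Pi.single i ((k : ℤ) + 1)
            = (x + Pi.single i (k : ℤ)) + Pi.single i 1 := by rw [hs]; abel
        rw [h1, hstep, ih]
        push_cast
        ring
    | pred k ih =>
        intro x i
        have hs : (Pi.single i (-(k : ℤ) - 1) : Fin m → ℤ)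
            = Pi.single i (-(k : ℤ)) - Pi.single i 1 := by
          rw [← Pi.single_sub]
        have h1 : x + Pi.single i (-(k : ℤ) - 1)
            = (x + Pi.single i (-(k : ℤ))) - Pi.single i 1 := by rw [hs]; abel
        rw [h1, hstep', ih]
        push_cast
        linear_combination h20
  have hmain : ∀ s : Finset (Fin m), ∀ x : Fin m → ℤ,
      c (x + ∑ i ∈ s, Pi.single i (y i)) = c x + ∑ i ∈ s, ((y i : ZMod 2)) := by
    intro s
    induction s using Finset.induction_on with
    | empty => intro x; simp
    | @insert i s hi ih =>
        intro x
        rw [Finset.sum_insert hi, Finset.sum_insert hi]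
        have h1 : x + (Pi.single i (y i) + ∑ j ∈ s, Pi.single j (y j)) =
            (x + ∑ j ∈ s, Pi.single j (y j)) + Pi.single i (y i) := by abel
        rw [h1, hsmul, ih]
        ring
  have hy0 : QuotientAddGroup.mk (s := colSpan m 1 M) y = QuotientAddGroup.mk 0 := by
    rw [QuotientAddGroup.eq_iff_sub_mem, sub_zero]
    exact mem_colSpan M y hM
  have hcy : c y = c 0 := by simp only [hc, hy0]
  have h := hmain Finset.univ 0
  rw [Finset.univ_sum_single, zero_add] at h
  rw [hcy, left_eq_add] at h
  rw [Int.cast_sum]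
  exact h

end Aux

theorem stmt_6 (m : ℕ) (hm : 1 ≤ m) (y : Fin m → ℤ)
    (hy : ∀ i : Fin m, y ≠ Pi.single i 1 ∧ y ≠ -Pi.single i 1)
    (M : Matrix (Fin m) (Fin 1) ℤ) (hM : ∀ i, M i 0 = y i) :
    (Even (Finset.univ.filter fun i => Odd (y i)).card →
      (SACG m 1 M).chromaticNumber = 2) ∧
    (Odd (Finset.univ.filter fun i => Odd (y i)).card →
      (SACG m 1 M).chromaticNumber = 3) := by
  have i0 : Fin m := ⟨0, hm⟩
  have h20 : (2 : ZMod 2) = 0 := by decide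
  -- the parity bridge
  have hbridge : ((∑ i, y i : ℤ) : ZMod 2) =
      ((Finset.univ.filter fun i => Odd (y i)).card : ZMod 2) := by
    rw [Int.cast_sum, ← Finset.sum_boole]
    refine Finset.sum_congr rfl fun i _ => ?_
    rcases Int.even_or_odd (y i) with ⟨b, hb⟩ | ⟨b, hb⟩
    · rw [if_neg (by rw [← Int.not_even_iff_odd]; exact fun h => h ⟨b, hb⟩), hb]
      push_cast
      linear_combination (b : ZMod 2) * h20
    · rw [if_pos ⟨b, hb⟩, hb]
      push_cast
      linear_combination (b : ZMod 2) * h20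
  -- no 1-coloring (there is an edge)
  have hno1 : ¬ (SACG m 1 M).Colorable 1 := by
    rintro ⟨C⟩
    exact C.valid (sacg_adj M y hM hy 0 i0) (Subsingleton.elim _ _)
  constructor
  · -- even case
    intro heven
    have hwy : ((∑ i, (1 : ℤ) * y i : ℤ) : ZMod 2) = 0 := by
      simp only [one_mul]
      rw [hbridge]
      obtain ⟨j, hj⟩ := heven
      rw [hj]
      push_cast
      linear_combination (j : ZMod 2) * h20
    set F := sacgHom M y 2 (fun _ => 1) hM hwy with hF
    have hspec := sacgHom_spec M y 2 (fun _ => 1) hM (fun i => Or.inl rfl) hwy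
    have hcol2 : (SACG m 1 M).Colorable 2 := by
      refine ⟨SimpleGraph.Coloring.mk (fun v => if F v = 0 then 0 else 1) ?_⟩
      intro x x' hadj heq
      have hd := hspec x x' hadj
      have hne : F x ≠ F x' := by
        intro h
        rw [h, sub_self] at hd
        revert hd
        decide
      have key : ∀ a b : ZMod 2, a ≠ b →
          (if a = 0 then (0 : Fin 2) else 1) ≠ (if b = 0 then 0 else 1) := by decide
      exact key _ _ hne heq
    rw [show (2 : ℕ∞) = ((1 + 1 : ℕ) : ℕ∞) from by norm_num]
    exact chrom_aux _ hcol2 hno1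
  · -- odd case
    intro hodd
    -- no 2-coloring
    have hno2 : ¬ (SACG m 1 M).Colorable 2 := by
      rintro ⟨C⟩
      have h := sacg_parity M y hM hy C
      rw [hbridge] at h
      obtain ⟨j, hj⟩ := hodd
      rw [hj] at h
      push_cast at h
      have h1 : (1 : ZMod 2) = 0 := by linear_combination h - (j : ZMod 2) * h20
      exact one_ne_zero h1
    -- the modulus
    set N : ℕ := ∑ i, (y i).natAbs with hN
    have hNodd : Odd N := by
      have hcast : (N : ZMod 2) = ((∑ i, y i : ℤ) : ZMod 2) := by
        rw [hN, Nat.cast_sum, Int.cast_sum]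
        refine Finset.sum_congr rfl fun i _ => ?_
        have hneg : ∀ t : ZMod 2, -t = t := by decide
        rcases Int.natAbs_eq (y i) with h | h
        · conv_rhs => rw [h]
          exact (Int.cast_natCast _).symm
        · conv_rhs => rw [h]
          rw [Int.cast_neg, hneg]
          exact (Int.cast_natCast _).symm
      rw [hbridge] at hcast
      obtain ⟨j, hj⟩ := hodd
      rcases Nat.even_or_odd N with ⟨b, hb⟩ | h
      · exfalso
        rw [hb, hj] at hcast
        push_cast at hcast
        have h1 : (1 : ZMod 2) = 0 := by
          linear_combination - hcast + (b : ZMod 2) * h20 - (j : ZMod 2) * h20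
        exact one_ne_zero h1
      · exact h
    have hN1 : N ≠ 1 := by
      intro h1
      obtain ⟨i, -, hi⟩ := Finset.exists_ne_zero_of_sum_ne_zero
        (s := Finset.univ) (f := fun i => (y i).natAbs) (by rw [← hN, h1]; exact one_ne_zero)
      have hsplit : (y i).natAbs + ∑ j ∈ Finset.univ.erase i, (y j).natAbs = 1 := by
        rw [Finset.add_sum_erase Finset.univ (fun i => (y i).natAbs) (Finset.mem_univ i),
          ← hN, h1]
      have hi1 : (y i).natAbs = 1 := by omega
      have hrest : ∑ j ∈ Finset.univ.erase i, (y j).natAbs = 0 := by omega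
      have hzero : ∀ j, j ≠ i → y j = 0 := by
        intro j hj
        have h := (Finset.sum_eq_zero_iff.mp hrest) j
          (Finset.mem_erase.mpr ⟨hj, Finset.mem_univ j⟩)
        exact Int.natAbs_eq_zero.mp h
      rcases Int.natAbs_eq_iff.mp hi1 with h | h
      · refine (hy i).1 (funext fun j => ?_)
        by_cases hji : j = i
        · subst hji; rw [h, Pi.single_eq_same]; norm_num
        · rw [hzero j hji, Pi.single_eq_of_ne hji]
      · refine (hy i).2 (funext fun j => ?_)
        by_cases hji : j = i
        · subst hji; rw [h]; simp
        · rw [hzero j hji]; simp [Pi.single_eq_of_ne hji]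
    have hN3 : 3 ≤ N := by
      obtain ⟨j, hj⟩ := hNodd
      omega
    haveI : NeZero N := ⟨by omega⟩
    -- the weights
    set w : Fin m → ℤ := fun i => if 0 ≤ y i then 1 else -1 with hw
    have hww : ∀ i, w i = 1 ∨ w i = -1 := by
      intro i; rw [hw]; dsimp only; split <;> simp
    have hwyN : (∑ i, w i * y i : ℤ) = (N : ℤ) := by
      rw [hN]
      push_cast
      refine Finset.sum_congr rfl fun i _ => ?_
      rw [hw]
      dsimp only
      rcases le_or_gt 0 (y i) with h | h
      · rw [if_pos h, one_mul, abs_of_nonneg h]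
      · rw [if_neg (not_le.mpr h), abs_of_neg h]
        ring
    have hwy : ((∑ i, w i * y i : ℤ) : ZMod N) = 0 := by
      rw [hwyN]
      push_cast
      exact ZMod.natCast_self N
    set F := sacgHom M y N w hM hwy with hF
    have hspec := sacgHom_spec M y N w hM hww hwy
    -- the 3-coloring of ZMod N
    set g : ZMod N → Fin 3 := fun t => if t.val + 1 = N then 2 else ⟨t.val % 2, by omega⟩
      with hg
    have gstep : ∀ t : ZMod N, g (t + 1) ≠ g t := by
      intro t
      have ha : t.val < N := ZMod.val_lt t
      have hv1 : (1 : ZMod N).val = 1 := by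
        rw [ZMod.val_one_eq_one_mod]
        exact Nat.mod_eq_of_lt (by omega)
      have hvadd : (t + 1).val = (t.val + 1) % N := by
        rw [ZMod.val_add, hv1]
      simp only [hg]
      rcases eq_or_lt_of_le (Nat.succ_le_of_lt ha) with hNa | hNa
      · -- wrap-around
        have hNa' : t.val + 1 = N := hNa
        rw [if_pos hNa']
        have h0 : (t + 1).val = 0 := by rw [hvadd, hNa']; exact Nat.mod_self _
        simp only [h0]
        rw [if_neg (by omega)]
        intro hcon
        have h := congrArg Fin.val hcon
        simp at h
      · have hlt : t.val + 1 < N := hNa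
        have h1 : (t + 1).val = t.val + 1 := by rw [hvadd, Nat.mod_eq_of_lt hlt]
        rw [if_neg (by omega : ¬ (t.val + 1 = N))]
        simp only [h1]
        by_cases h2 : t.val + 1 + 1 = N
        · rw [if_pos h2]
          intro hcon
          have h := congrArg Fin.val hcon
          simp only [Fin.val_two] at h
          omega
        · rw [if_neg h2]
          intro hcon
          have h := congrArg Fin.val hcon
          simp only at h
          omega
    have hcol3 : (SACG m 1 M).Colorable 3 := by
      refine ⟨SimpleGraph.Coloring.mk (fun v => g (F v)) ?_⟩
      intro x x' hadj heq
      change g (F x) = g (F x') at heq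
      rcases hspec x x' hadj with hd | hd
      · have h : F x = F x' + 1 := by rw [← hd]; ring
        rw [h] at heq
        exact gstep (F x') heq
      · have h : F x' = F x + 1 := by
          have h' : F x' - F x = 1 := by rw [← neg_sub, hd]; ring
          rw [← h']; ring
        rw [h] at heq
        exact gstep (F x) heq.symm
    rw [show (3 : ℕ∞) = ((2 + 1 : ℕ) : ℕ∞) from by norm_num]
    exact chrom_aux _ hcol3 hno2
end
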